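/- Let h2 ≥ h1 be nonnegative integers. Let S (respectively T) be a balanced rooted binary tree on 2^(h1+h2) leaves consisting of 2^(h1) balanced pendant subtrees S_1, S_2, ..., S_{2^(h1)} (respectively T_1, T_2, ..., T_{2^(h1)}) each of size 2^(h2). Then the leaves of S and T can each be bijectively labelled with the elements of {1, 2, ..., 2^(h1+h2)} so that, for all i, j ∈ {1, 2, ..., 2^(h1)}, the pendant subtrees S_i and T_j have exactly 2^(h2−h1) labels in common. -/

import Mathlib

/-!
Rooted binary phylogenetic trees, restrictions, agreement subtrees, and
maximum agreement subtrees (MASTs), following Martin–Thatte style definitions.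
-/

namespace PhyloMAST

/-- A rooted binary tree with leaves labelled by `α`. -/
inductive PTree (α : Type) : Type
  | leaf : α → PTree α
  | node : PTree α → PTree α → PTree α

namespace PTree

variable {α β : Type}

/-- The list of leaf labels, read left to right. -/
def leafList : PTree α → List α
  | leaf x => [x]
  | node l r => leafList l ++ leafList r

/-- The set of leaf labels. -/
def leaves [DecidableEq α] (t : PTree α) : Finset α := t.leafList.toFinset

/-- The height: number of edges on a longest root-to-leaf path. -/
def height : PTree α → ℕ
  | leaf _ => 0
  | node l r => max (height l) (height r) + 1

/-- `t` is a genuine phylogenetic tree: its leaf labels are pairwise distinct. -/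
def Phylo (t : PTree α) : Prop := t.leafList.Nodup

/-- `t` is balanced: its number of leaves is `2 ^ height`. -/
def Balanced (t : PTree α) : Prop := t.leafList.length = 2 ^ t.height

/-- The restriction `t|Y`: the minimal subtree connecting the leaves in `Y`
with all non-root degree-two vertices suppressed; `none` if no leaf of `t`
lies in `Y`. -/
def restrict [DecidableEq α] : PTree α → Finset α → Option (PTree α)
  | leaf x, Y => if x ∈ Y then some (leaf x) else none
  | node l r, Y =>
    match restrict l Y, restrict r Y with
    | some l', some r' => some (node l' r')
    | some l', none => some l'
    | none, some r' => some r'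
    | none, none => none

/-- Isomorphism of leaf-labelled rooted binary trees (children are unordered). -/
inductive Iso : PTree α → PTree α → Prop
  | leaf (x : α) : Iso (leaf x) (leaf x)
  | node {a b c d : PTree α} : Iso a c → Iso b d → Iso (node a b) (node c d)
  | swap {a b c d : PTree α} : Iso a d → Iso b c → Iso (node a b) (node c d)

/-- `Agree S T Y`: the set `Y` induces an agreement subtree of `S` and `T`. -/
def Agree [DecidableEq α] (S T : PTree α) (Y : Finset α) : Prop :=
  Y ⊆ S.leaves ∩ T.leaves ∧
    ∃ S' T', S.restrict Y = some S' ∧ T.restrict Y = some T' ∧ Iso S' T'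

/-- `mast S T`: the maximum size of an agreement subtree of `S` and `T`. -/
noncomputable def mast [DecidableEq α] (S T : PTree α) : ℕ :=
  sSup {k | ∃ Y : Finset α, Agree S T Y ∧ Y.card = k}

/-- The caterpillar tree `(l₁, l₂, …, lₙ)` built from a (nonempty) list:
`l₁` and `l₂` share a parent, and each later leaf hangs off the path to the
root, which is adjacent to the last leaf. -/
def catList [Inhabited α] : List α → PTree α
  | [] => leaf default
  | x :: xs => xs.foldl (fun t y => node t (leaf y)) (leaf x)

/-- `T` embeds the phylogenetic tree `T'`: the label set of `T'` is contained
in that of `T`, and the restriction of `T` to it is isomorphic to `T'`. -/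
def Embeds [DecidableEq α] (T T' : PTree α) : Prop :=
  T'.leaves ⊆ T.leaves ∧ ∃ R, T.restrict T'.leaves = some R ∧ Iso R T'

/-- `Subtree s t`: `s` is a (pendant) subtree of `t` (possibly `t` itself). -/
inductive Subtree : PTree α → PTree α → Prop
  | refl (t : PTree α) : Subtree t t
  | left {s l r : PTree α} : Subtree s l → Subtree s (node l r)
  | right {s l r : PTree α} : Subtree s r → Subtree s (node l r)

/-- The pendant subtrees rooted at depth `k`, read left to right. -/
def subtreesAt : ℕ → PTree α → List (PTree α)
  | 0, t => [t]
  | _ + 1, leaf x => [leaf x]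
  | k + 1, node l r => subtreesAt k l ++ subtreesAt k r

/-- Two trees have the same unlabelled shape (a labelling of the second
yields the first). -/
inductive SameShape : PTree α → PTree β → Prop
  | leaf (x : α) (y : β) : SameShape (leaf x) (leaf y)
  | node {a b : PTree α} {c d : PTree β} :
      SameShape a c → SameShape b d → SameShape (node a b) (node c d)

end PTree

end PhyloMAST

open PhyloMAST PTree

namespace PhyloMAST
namespace PTree

variable {α β : Type}

theorem leafList_length_le (t : PTree α) : t.leafList.length ≤ 2 ^ t.height := by
  induction t with
  | leaf x => simp [leafList, height]
  | node l r ihl ihr =>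
      simp only [leafList, height, List.length_append]
      have h1 : 2 ^ l.height ≤ 2 ^ max l.height r.height :=
        Nat.pow_le_pow_right (by norm_num) (le_max_left _ _)
      have h2 : 2 ^ r.height ≤ 2 ^ max l.height r.height :=
        Nat.pow_le_pow_right (by norm_num) (le_max_right _ _)
      calc l.leafList.length + r.leafList.length
          ≤ 2 ^ max l.height r.height + 2 ^ max l.height r.height := by omega
        _ = 2 ^ (max l.height r.height + 1) := by ring

theorem balanced_node {l r : PTree α} (h : (node l r).Balanced) :
    l.Balanced ∧ r.Balanced ∧ l.height = max l.height r.height ∧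
      r.height = max l.height r.height := by
  have hl := leafList_length_le l
  have hr := leafList_length_le r
  have h1 : 2 ^ l.height ≤ 2 ^ max l.height r.height :=
    Nat.pow_le_pow_right (by norm_num) (le_max_left _ _)
  have h2 : 2 ^ r.height ≤ 2 ^ max l.height r.height :=
    Nat.pow_le_pow_right (by norm_num) (le_max_right _ _)
  have hsum : l.leafList.length + r.leafList.length = 2 ^ (max l.height r.height + 1) := by
    simpa [Balanced, leafList, height] using h
  rw [pow_succ, mul_two] at hsum
  have hle : l.leafList.length = 2 ^ max l.height r.height ∧
      r.leafList.length = 2 ^ max l.height r.height := by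
    constructor <;> omega
  have hlh : l.height = max l.height r.height := by
    have : 2 ^ max l.height r.height ≤ 2 ^ l.height := by omega
    have := (Nat.pow_le_pow_iff_right (by norm_num : 1 < 2)).mp this
    omega
  have hrh : r.height = max l.height r.height := by
    have : 2 ^ max l.height r.height ≤ 2 ^ r.height := by omega
    have := (Nat.pow_le_pow_iff_right (by norm_num : 1 < 2)).mp this
    omega
  refine ⟨?_, ?_, hlh, hrh⟩
  · rw [Balanced, hlh]; exact hle.1
  · rw [Balanced, hrh]; exact hle.2

/-- Structural lemma: each depth-`k` pendant subtree of a balanced tree of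
height `k + m` has leaf list equal to an aligned chunk of the full leaf list. -/
theorem subtreesAt_chunk : ∀ (k m : ℕ) (t : PTree α), t.Balanced → t.height = k + m →
    ∀ A ∈ t.subtreesAt k, ∃ i < 2 ^ k,
      A.leafList = (t.leafList.drop (i * 2 ^ m)).take (2 ^ m)
  | 0, m, t, hb, hh, A, hA => by
      simp only [subtreesAt, List.mem_singleton] at hA
      subst hA
      refine ⟨0, by positivity, ?_⟩
      simp only [Nat.zero_mul, List.drop_zero]
      rw [List.take_of_length_le]
      rw [hb, hh, Nat.zero_add]
  | k + 1, m, t, hb, hh, A, hA => by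
      cases t with
      | leaf x => simp only [height] at hh; omega
      | node l r =>
          obtain ⟨hbl, hbr, hhl, hhr⟩ := balanced_node hb
          have hh' : max l.height r.height = k + m := by
            simp only [height] at hh; omega
          have hll : l.leafList.length = 2 ^ (k + m) := by
            rw [hbl, hhl, hh']
          simp only [subtreesAt, List.mem_append] at hA
          rcases hA with hA | hA
          · obtain ⟨i, hi, hchunk⟩ := subtreesAt_chunk k m l hbl (hhl.trans hh') A hA
            refine ⟨i, by calc i < 2 ^ k := hi
                             _ ≤ 2 ^ (k+1) := Nat.pow_le_pow_right (by norm_num) (by omega), ?_⟩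
            rw [hchunk]
            show _ = ((leafList l ++ leafList r).drop (i * 2 ^ m)).take (2 ^ m)
            rw [List.drop_append]
            rw [List.take_append_of_le_length]
            rw [List.length_drop, hll, pow_add]
            have h3 : (i + 1) * 2 ^ m ≤ 2 ^ k * 2 ^ m :=
              Nat.mul_le_mul_right _ (by omega)
            rw [add_mul, one_mul] at h3
            omega
          · obtain ⟨i, hi, hchunk⟩ := subtreesAt_chunk k m r hbr (hhr.trans hh') A hA
            refine ⟨2 ^ k + i, by rw [pow_succ]; omega, ?_⟩
            rw [hchunk]
            show _ = ((leafList l ++ leafList r).drop ((2 ^ k + i) * 2 ^ m)).take (2 ^ m)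
            rw [List.drop_append]
            have h1 : (2 ^ k + i) * 2 ^ m - l.leafList.length = i * 2 ^ m := by
              rw [hll, pow_add, add_mul]; omega
            have h2 : l.leafList.drop ((2 ^ k + i) * 2 ^ m) = [] := by
              apply List.drop_eq_nil_of_le
              rw [hll, pow_add, add_mul]; omega
            rw [h1, h2, List.nil_append]

/-- Relabel a tree using a list of labels (left to right). -/
def assign : PTree α → List ℕ → PTree ℕ
  | .leaf _, L => .leaf (L.headD 0)
  | .node l r, L =>
      .node (assign l (L.take l.leafList.length)) (assign r (L.drop l.leafList.length))

theorem sameShape_assign (t : PTree α) (L : List ℕ) : SameShape (assign t L) t := by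
  induction t generalizing L with
  | leaf x => exact SameShape.leaf _ _
  | node l r ihl ihr => exact SameShape.node (ihl _) (ihr _)

theorem leafList_assign : ∀ (t : PTree α) (L : List ℕ),
    L.length = t.leafList.length → (assign t L).leafList = L
  | .leaf x, L, hL => by
      simp only [leafList, List.length_singleton] at hL
      match L, hL with
      | [a], _ => rfl
  | .node l r, L, hL => by
      simp only [leafList, List.length_append] at hL
      have h1 : (L.take l.leafList.length).length = l.leafList.length := by
        rw [List.length_take]; omega
      have h2 : (L.drop l.leafList.length).length = r.leafList.length := by
        rw [List.length_drop]; omega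
      show (assign l _).leafList ++ (assign r _).leafList = L
      rw [leafList_assign l _ h1, leafList_assign r _ h2, List.take_append_drop]

theorem SameShape.height_eq {s : PTree α} {t : PTree β} (h : SameShape s t) :
    s.height = t.height := by
  induction h with
  | leaf => rfl
  | node _ _ ih1 ih2 => simp [height, ih1, ih2]

theorem SameShape.length_eq {s : PTree α} {t : PTree β} (h : SameShape s t) :
    s.leafList.length = t.leafList.length := by
  induction h with
  | leaf => rfl
  | node _ _ ih1 ih2 => simp [leafList, ih1, ih2]

theorem SameShape.balanced {s : PTree α} {t : PTree β} (h : SameShape s t)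
    (hb : t.Balanced) : s.Balanced := by
  rw [Balanced, h.height_eq, h.length_eq]; exact hb

end PTree
end PhyloMAST

theorem mem_take_drop_range {a b n x : ℕ} (h : a + b ≤ n) :
    x ∈ ((List.range n).drop a).take b ↔ ∃ u < b, x = a + u := by
  have hlen : (((List.range n).drop a).take b).length = b := by
    simp; omega
  constructor
  · intro hx
    obtain ⟨i, hi, hix⟩ := List.mem_iff_getElem.mp hx
    refine ⟨i, by omega, ?_⟩
    rw [← hix, List.getElem_take, List.getElem_drop, List.getElem_range]
  · rintro ⟨u, hu, rfl⟩
    refine List.mem_iff_getElem.mpr ⟨u, by omega, ?_⟩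
    rw [List.getElem_take, List.getElem_drop, List.getElem_range]

/-- If `S₀` and `T₀` are balanced rooted binary trees of
height `h₁ + h₂` (with `h₁ ≤ h₂`), each consisting of `2 ^ h₁` balanced
pendant subtrees of size `2 ^ h₂`, then their leaves can be bijectively
labelled with `{1, …, 2 ^ (h₁ + h₂)}` so that every depth-`h₁` pendant
subtree of `S` shares exactly `2 ^ (h₂ - h₁)` labels with every depth-`h₁`
pendant subtree of `T`. -/
theorem exists_labelling_equal_overlaps (h1 h2 : ℕ) (h12 : h1 ≤ h2)
    (S0 T0 : PTree Unit) (hbS0 : Balanced S0) (hbT0 : Balanced T0)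
    (hhS0 : S0.height = h1 + h2) (hhT0 : T0.height = h1 + h2) :
    ∃ S T : PTree ℕ, SameShape S S0 ∧ SameShape T T0 ∧
      Phylo S ∧ Phylo T ∧
      S.leaves = Finset.Icc 1 (2 ^ (h1 + h2)) ∧
      T.leaves = Finset.Icc 1 (2 ^ (h1 + h2)) ∧
      ∀ A ∈ S.subtreesAt h1, ∀ B ∈ T.subtreesAt h1,
        (A.leaves ∩ B.leaves).card = 2 ^ (h2 - h1) := by
  obtain ⟨P1, hP1def⟩ : ∃ x, x = 2 ^ h1 := ⟨_, rfl⟩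
  obtain ⟨P2, hP2def⟩ : ∃ x, x = 2 ^ h2 := ⟨_, rfl⟩
  obtain ⟨D, hDdef⟩ : ∃ x, x = 2 ^ (h2 - h1) := ⟨_, rfl⟩
  rw [← hDdef]
  rw [show (2:ℕ) ^ (h1 + h2) = P1 * P2 by rw [hP1def, hP2def, ← pow_add]]
  have hP1D : P1 * D = P2 := by
    rw [hP1def, hDdef, hP2def, ← pow_add]; congr 1; omega
  have hP12 : P1 * P2 = 2 ^ (h1 + h2) := by
    rw [hP1def, hP2def, ← pow_add]
  have hP1pos : 0 < P1 := hP1def ▸ Nat.pow_pos (by norm_num)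
  have hP2pos : 0 < P2 := hP2def ▸ Nat.pow_pos (by norm_num)
  have hDpos : 0 < D := hDdef ▸ Nat.pow_pos (by norm_num)
  -- the two labelling functions
  obtain ⟨f, hfdef⟩ : ∃ f : ℕ → ℕ,
      f = fun n => (n % P2 % P1) * P2 + (n / P2) * D + (n % P2 / P1) + 1 := ⟨_, rfl⟩
  have hf_formula : ∀ i u, u < P2 → f (P2 * i + u) = (u % P1) * P2 + i * D + u / P1 + 1 := by
    intro i u hu
    have h1' : (P2 * i + u) % P2 = u := by
      rw [Nat.mul_add_mod, Nat.mod_eq_of_lt hu]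
    have h2' : (P2 * i + u) / P2 = i := by
      rw [Nat.mul_add_div hP2pos, Nat.div_eq_of_lt hu, Nat.add_zero]
    simp only [hfdef, h1', h2']
  -- bounds and injectivity
  have hsublt : ∀ i q, i < P1 → q < D → i * D + q < P2 := by
    intro i q hi hq
    have : (i + 1) * D ≤ P1 * D := Nat.mul_le_mul_right _ hi
    rw [add_mul, one_mul] at this
    omega
  have hf_bound : ∀ n < P1 * P2, 1 ≤ f n ∧ f n ≤ P1 * P2 := by
    intro n hn
    have ha : n % P2 % P1 < P1 := Nat.mod_lt _ hP1pos
    have hi : n / P2 < P1 := Nat.div_lt_of_lt_mul (by rw [mul_comm]; exact hn)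
    have hq : n % P2 / P1 < D := Nat.div_lt_of_lt_mul (by rw [hP1D]; exact Nat.mod_lt _ hP2pos)
    have h3 := hsublt (n / P2) (n % P2 / P1) hi hq
    have h4 : (n % P2 % P1 + 1) * P2 ≤ P1 * P2 := Nat.mul_le_mul_right _ ha
    rw [add_mul, one_mul] at h4
    simp only [hfdef]
    generalize n % P2 % P1 * P2 = x at h4 ⊢
    generalize n / P2 * D = y at h3 ⊢
    generalize n % P2 / P1 = z at h3 ⊢
    omega
  have hf_inj : ∀ n < P1 * P2, ∀ n' < P1 * P2, f n = f n' → n = n' := by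
    have key : ∀ n < P1 * P2,
        P2 * ((f n - 1) % P2 / D) + (P1 * ((f n - 1) % P2 % D) + (f n - 1) / P2) = n := by
      intro n hn
      have hi : n / P2 < P1 := Nat.div_lt_of_lt_mul (by rw [mul_comm]; exact hn)
      have hq : n % P2 / P1 < D := Nat.div_lt_of_lt_mul (by rw [hP1D]; exact Nat.mod_lt _ hP2pos)
      have hs : n / P2 * D + n % P2 / P1 < P2 := hsublt _ _ hi hq
      have hx : f n - 1 = (n / P2 * D + n % P2 / P1) + (n % P2 % P1) * P2 := by
        simp only [hfdef]
        generalize n % P2 % P1 * P2 = x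
        generalize n / P2 * D = y
        generalize n % P2 / P1 = z
        omega
      rw [hx, Nat.add_mul_div_right _ _ hP2pos, Nat.div_eq_of_lt hs, Nat.zero_add,
        Nat.add_mul_mod_self_right, Nat.mod_eq_of_lt hs]
      have hdq : (n / P2 * D + n % P2 / P1) / D = n / P2 := by
        rw [mul_comm (n / P2) D, Nat.mul_add_div hDpos, Nat.div_eq_of_lt hq, Nat.add_zero]
      have hdm : (n / P2 * D + n % P2 / P1) % D = n % P2 / P1 := by
        rw [mul_comm (n / P2) D, Nat.mul_add_mod, Nat.mod_eq_of_lt hq]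
      rw [hdq, hdm, Nat.div_add_mod, Nat.div_add_mod]
    intro n hn n' hn' heq
    have := key n hn
    rw [heq, key n' hn'] at this
    exact this.symm
  -- the leaf lists
  set Ls : List ℕ := (List.range (P1 * P2)).map (· + 1) with hLsdef
  set Lt : List ℕ := (List.range (P1 * P2)).map f with hLtdef
  have hLslen : Ls.length = P1 * P2 := by simp [hLsdef]
  have hLtlen : Lt.length = P1 * P2 := by simp [hLtdef]
  have hS0len : S0.leafList.length = P1 * P2 := by rw [hbS0, hhS0, hP12]
  have hT0len : T0.leafList.length = P1 * P2 := by rw [hbT0, hhT0, hP12]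
  refine ⟨assign S0 Ls, assign T0 Lt, sameShape_assign _ _, sameShape_assign _ _, ?_⟩
  set S := assign S0 Ls with hSdef
  set T := assign T0 Lt with hTdef
  have hSleaf : S.leafList = Ls := leafList_assign _ _ (by rw [hLslen, hS0len])
  have hTleaf : T.leafList = Lt := leafList_assign _ _ (by rw [hLtlen, hT0len])
  have hbS : S.Balanced := (sameShape_assign S0 Ls).balanced hbS0
  have hbT : T.Balanced := (sameShape_assign T0 Lt).balanced hbT0
  have hhS : S.height = h1 + h2 := (sameShape_assign S0 Ls).height_eq.trans hhS0
  have hhT : T.height = h1 + h2 := (sameShape_assign T0 Lt).height_eq.trans hhT0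
  have hLsnodup : Ls.Nodup := List.nodup_range.map (fun a b => by omega)
  have hLtnodup : Lt.Nodup := by
    refine List.nodup_range.map_on ?_
    intro x hx y hy hxy
    exact hf_inj x (List.mem_range.mp hx) y (List.mem_range.mp hy) hxy
  -- leaf membership characterizations for the chunks
  have hchunkS : ∀ i < P1, ∀ x, (x ∈ (Ls.drop (i * P2)).take P2 ↔ ∃ u < P2, x = i * P2 + u + 1) := by
    intro i hi x
    have hle : i * P2 + P2 ≤ P1 * P2 := by
      have := Nat.mul_le_mul_right P2 (show i + 1 ≤ P1 by omega)
      rw [add_mul, one_mul] at this; omega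
    rw [hLsdef, ← List.map_drop, ← List.map_take, List.mem_map]
    constructor
    · rintro ⟨y, hy, rfl⟩
      obtain ⟨u, hu, rfl⟩ := (mem_take_drop_range hle).mp hy
      exact ⟨u, hu, rfl⟩
    · rintro ⟨u, hu, rfl⟩
      exact ⟨i * P2 + u, (mem_take_drop_range hle).mpr ⟨u, hu, rfl⟩, rfl⟩
  have hchunkT : ∀ i < P1, ∀ x, (x ∈ (Lt.drop (i * P2)).take P2 ↔ ∃ u < P2, x = f (i * P2 + u)) := by
    intro i hi x
    have hle : i * P2 + P2 ≤ P1 * P2 := by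
      have := Nat.mul_le_mul_right P2 (show i + 1 ≤ P1 by omega)
      rw [add_mul, one_mul] at this; omega
    rw [hLtdef, ← List.map_drop, ← List.map_take, List.mem_map]
    constructor
    · rintro ⟨y, hy, rfl⟩
      obtain ⟨u, hu, rfl⟩ := (mem_take_drop_range hle).mp hy
      exact ⟨u, hu, rfl⟩
    · rintro ⟨u, hu, rfl⟩
      exact ⟨i * P2 + u, (mem_take_drop_range hle).mpr ⟨u, hu, rfl⟩, rfl⟩
  refine ⟨(by rw [Phylo, hSleaf]; exact hLsnodup),
    (by rw [Phylo, hTleaf]; exact hLtnodup), ?_, ?_, ?_⟩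
  · -- S.leaves
    rw [leaves, hSleaf]
    ext x
    simp only [hLsdef, List.mem_toFinset, List.mem_map, List.mem_range, Finset.mem_Icc]
    constructor
    · rintro ⟨n, hn, rfl⟩; omega
    · intro hx; exact ⟨x - 1, by omega, by omega⟩
  · -- T.leaves
    rw [leaves, hTleaf]
    apply Finset.eq_of_subset_of_card_le
    · intro x hx
      simp only [hLtdef, List.mem_toFinset, List.mem_map, List.mem_range] at hx
      obtain ⟨n, hn, rfl⟩ := hx
      have := hf_bound n hn
      exact Finset.mem_Icc.mpr ⟨this.1, this.2⟩
    · rw [List.toFinset_card_of_nodup hLtnodup, hLtlen, Nat.card_Icc]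
      omega
  · -- the overlap property
    intro A hA B hB
    obtain ⟨i, hi, hAchunk⟩ := subtreesAt_chunk h1 h2 S hbS hhS A hA
    obtain ⟨i', hi', hBchunk⟩ := subtreesAt_chunk h1 h2 T hbT hhT B hB
    rw [← hP1def] at hi hi'
    rw [← hP2def] at hAchunk hBchunk
    rw [hSleaf] at hAchunk
    rw [hTleaf] at hBchunk
    have hAmem : ∀ x, x ∈ A.leaves ↔ ∃ u < P2, x = i * P2 + u + 1 := by
      intro x; rw [leaves, List.mem_toFinset, hAchunk]; exact hchunkS i hi x
    have hBmem : ∀ x, x ∈ B.leaves ↔ ∃ u < P2, x = f (i' * P2 + u) := by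
      intro x; rw [leaves, List.mem_toFinset, hBchunk]; exact hchunkT i' hi' x
    have hinter : A.leaves ∩ B.leaves = Finset.Icc (i * P2 + i' * D + 1) (i * P2 + i' * D + D) := by
      ext x
      rw [Finset.mem_inter, hAmem, hBmem, Finset.mem_Icc]
      constructor
      · rintro ⟨⟨u, hu, rfl⟩, v, hv, hfv⟩
        rw [mul_comm i' P2, hf_formula i' v hv] at hfv
        have ha : v % P1 < P1 := Nat.mod_lt _ hP1pos
        have hq : v / P1 < D := Nat.div_lt_of_lt_mul (by rw [hP1D]; exact hv)
        have hIQ : i' * D + v / P1 < P2 := hsublt i' _ hi' hq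
        have hai : v % P1 = i := by
          rcases Nat.lt_trichotomy (v % P1) i with h | h | h
          · exfalso
            have hh : (v % P1 + 1) * P2 ≤ i * P2 := Nat.mul_le_mul_right _ h
            rw [add_mul, one_mul] at hh
            generalize i * P2 = X at hfv hh
            generalize v % P1 * P2 = Y at hfv hh
            generalize i' * D = Z at hfv hIQ
            generalize v / P1 = w at hfv hIQ
            omega
          · exact h
          · exfalso
            have hh : (i + 1) * P2 ≤ v % P1 * P2 := Nat.mul_le_mul_right _ h
            rw [add_mul, one_mul] at hh
            generalize i * P2 = X at hfv hh
            generalize v % P1 * P2 = Y at hfv hh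
            generalize i' * D = Z at hfv hIQ
            generalize v / P1 = w at hfv hIQ
            omega
        rw [hai] at hfv
        generalize i * P2 = X at hfv ⊢
        generalize i' * D = Z at hfv ⊢
        generalize v / P1 = w at hfv hq
        omega
      · intro hx
        have hID : (i' + 1) * D ≤ P1 * D := Nat.mul_le_mul_right _ hi'
        rw [add_mul, one_mul, hP1D] at hID
        obtain ⟨q, hqdef⟩ : ∃ q, q = x - (i * P2 + i' * D + 1) := ⟨_, rfl⟩
        have hq : q < D := by
          generalize i * P2 = X at hx hqdef
          generalize i' * D = Z at hx hqdef hID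
          omega
        have hxval : x = i * P2 + i' * D + q + 1 := by
          generalize i * P2 = X at hx hqdef ⊢
          generalize i' * D = Z at hx hqdef hID ⊢
          omega
        have huP : q * P1 + i < P2 := by
          have hh : (q + 1) * P1 ≤ D * P1 := Nat.mul_le_mul_right _ hq
          rw [add_mul, one_mul, mul_comm D P1, hP1D] at hh
          generalize q * P1 = W at hh ⊢
          omega
        refine ⟨⟨i' * D + q, ?_, ?_⟩, q * P1 + i, huP, ?_⟩
        · generalize i' * D = Z at hID ⊢
          omega
        · rw [hxval]; ring
        · rw [mul_comm i' P2, hf_formula i' (q * P1 + i) huP]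
          have hm : (q * P1 + i) % P1 = i := by
            rw [mul_comm q P1, Nat.mul_add_mod, Nat.mod_eq_of_lt hi]
          have hd : (q * P1 + i) / P1 = q := by
            rw [mul_comm q P1, Nat.mul_add_div hP1pos, Nat.div_eq_of_lt hi, Nat.add_zero]
          rw [hm, hd, hxval]
    rw [hinter, Nat.card_Icc]
    omega
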